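/- For ζ = ζ_{2r} a primitive 2r-th root of unity and nonnegative integers a, i < r and u, l ≥ 0, the quantum binomial coefficient satisfies: binom_q(a+i+r(u+l), i+rl) evaluated at q = ζ equals (−1)^{al + rul + ui} · binom(u+l, l) · binom_ζ(a+i, i), where binom(u+l, l) is the ordinary binomial coefficient. -/
import Mathlib


/-- The balanced quantum binomial coefficient `[n choose k]_q` (with `[m] = (q^m−q^{−m})/(q−q^{−1})`)
evaluated at `q = z ∈ ℂˣ`, defined by the `q`-Pascal recursion
`[n+1 choose k+1] = q^{k+1} [n choose k+1] + q^{k−n} [n choose k]`. -/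
noncomputable def qbinomC (z : ℂ) : ℕ → ℕ → ℂ
  | _, 0 => 1
  | 0, _ + 1 => 0
  | n + 1, k + 1 => z ^ (k + 1) * qbinomC z n (k + 1) + z ^ ((k : ℤ) - n) * qbinomC z n k

lemma qbinomC_zero (z : ℂ) (n : ℕ) : qbinomC z n 0 = 1 := by cases n <;> rfl

lemma qbinomC_eq_zero (z : ℂ) : ∀ {n k : ℕ}, n < k → qbinomC z n k = 0
  | 0, _+1, _ => rfl
  | n+1, k+1, h => by
      rw [show qbinomC z (n+1) (k+1) = z ^ (k + 1) * qbinomC z n (k + 1) + z ^ ((k : ℤ) - n) * qbinomC z n k from rfl,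
        qbinomC_eq_zero z (show n < k+1 by omega), qbinomC_eq_zero z (show n < k by omega)]
      ring

lemma qbinomC_diag (z : ℂ) : ∀ n, qbinomC z n n = 1
  | 0 => rfl
  | n+1 => by
      rw [show qbinomC z (n+1) (n+1) = z ^ (n + 1) * qbinomC z n (n + 1) + z ^ ((n : ℤ) - n) * qbinomC z n n from rfl,
        qbinomC_eq_zero z (by omega), qbinomC_diag z n]
      simp

/-- `qbinomC` extended to integer lower index (zero for negative). -/
noncomputable def D (z : ℂ) (n : ℕ) (k : ℤ) : ℂ :=
  if 0 ≤ k then qbinomC z n k.toNat else 0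

lemma D_natCast (z : ℂ) (n k : ℕ) : D z n (k : ℤ) = qbinomC z n k := by
  simp [D]

lemma D_neg (z : ℂ) (n : ℕ) {k : ℤ} (h : k < 0) : D z n k = 0 := by
  simp [D, not_le.mpr h]

lemma D_zero (z : ℂ) (n : ℕ) : D z n 0 = 1 := by simp [D, qbinomC_zero]

lemma D_eq_zero (z : ℂ) (n : ℕ) {k : ℤ} (h : (n : ℤ) < k) : D z n k = 0 := by
  rcases lt_or_ge k 0 with hk | hk
  · exact D_neg z n hk
  · obtain ⟨m, rfl⟩ := Int.eq_ofNat_of_zero_le hk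
    rw [D_natCast]
    exact qbinomC_eq_zero z (by exact_mod_cast h)

lemma D_diag (z : ℂ) (n : ℕ) : D z n (n : ℤ) = 1 := by
  rw [D_natCast, qbinomC_diag]

lemma D_pascal (z : ℂ) (hz : z ≠ 0) (n : ℕ) (k : ℤ) :
    D z (n+1) k = z^k * D z n k + z^(k-1-(n:ℤ)) * D z n (k-1) := by
  rcases lt_trichotomy k 0 with hk | hk | hk
  · rw [D_neg z _ hk, D_neg z _ hk, D_neg z _ (by omega)]; ring
  · subst hk
    rw [D_zero, D_zero, show (0:ℤ)-1 = -1 from rfl, D_neg z _ (by norm_num)]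
    simp
  · obtain ⟨m, rfl⟩ : ∃ m : ℕ, k = (m : ℤ) + 1 := by
      obtain ⟨m', rfl⟩ := Int.eq_ofNat_of_zero_le hk.le
      exact ⟨m' - 1, by omega⟩
    rw [show ((m:ℤ)+1) - 1 - (n:ℤ) = (m:ℤ) - n by ring,
      show ((m:ℤ)+1) = ((m+1 : ℕ) : ℤ) by push_cast; ring, D_natCast, D_natCast,
      show ((m+1:ℕ):ℤ) - 1 = ((m:ℕ):ℤ) by push_cast; ring, D_natCast]
    rw [show qbinomC z (n+1) (m+1) = z ^ (m + 1) * qbinomC z n (m + 1) + z ^ ((m : ℤ) - n) * qbinomC z n m from rfl]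
    rw [← zpow_natCast z (m+1)]

/-- Absorption: `{j} · D n j = {n−j+1} · D n (j−1)`. Holds for any nonzero `z`. -/
lemma D_absorb (z : ℂ) (hz : z ≠ 0) : ∀ (n : ℕ) (j : ℤ),
    (z^j - z^(-j)) * D z n j = (z^((n:ℤ)-j+1) - z^(j-1-(n:ℤ))) * D z n (j-1)
  | 0, j => by
      rcases lt_trichotomy j 1 with hj | hj | hj
      · rcases lt_trichotomy j 0 with h0 | h0 | h0
        · rw [D_neg z _ h0, D_neg z _ (by omega)]; ring
        · subst h0
          rw [show (0:ℤ)-1 = -1 from rfl, D_neg z 0 (show (-1:ℤ) < 0 by norm_num)]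
          norm_num
        · omega
      · subst hj
        rw [D_eq_zero z 0 (show (0:ℤ) < 1 by norm_num)]
        norm_num
      · rw [D_eq_zero z 0 (show (0:ℤ) < j by omega), D_eq_zero z 0 (show (0:ℤ) < j-1 by omega)]
        ring
  | n+1, j => by
      have h1 := D_absorb z hz n j
      have h2 := D_absorb z hz n (j-1)
      rw [show (n:ℤ)-(j-1)+1 = (n:ℤ)+2-j by ring, show (j-1)-1-(n:ℤ) = j-(n:ℤ)-2 by ring,
        show -(j-1) = 1-j by ring] at h2
      have key : z^j*(z^((n:ℤ)-j+1) - z^(j-1-(n:ℤ))) + (z^j-z^(-j))*z^(j-1-(n:ℤ))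
          = (z^((n:ℤ)+2-j) - z^(j-(n:ℤ)-2))*z^(j-1) + z^(j-2-(n:ℤ))*(z^(j-1) - z^(1-j)) := by
        simp only [mul_sub, sub_mul, ← zpow_add₀ hz]
        ring_nf
      rw [D_pascal z hz n j, D_pascal z hz n (j-1),
        show ((n+1:ℕ):ℤ) = (n:ℤ)+1 by push_cast; ring]
      rw [show (n:ℤ)+1-j+1 = (n:ℤ)+2-j by ring, show j-1-((n:ℤ)+1) = j-(n:ℤ)-2 by ring,
        show j-1-1-(n:ℤ) = j-2-(n:ℤ) by ring]
      linear_combination z^j * h1 + z^(j-2-(n:ℤ)) * h2 + (D z n (j-1)) * key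
section Root

variable {r : ℕ} {ζ : ℂ}

lemma sign_period (e f c : ℤ) (h : e = f + 2*c) : (-1:ℂ)^e = (-1:ℂ)^f := by
  subst h
  rw [zpow_add₀ (by norm_num : (-1:ℂ) ≠ 0), zpow_mul]
  norm_num

lemma zeta_pow_r (hr : 1 ≤ r) (hζ : IsPrimitiveRoot ζ (2*r)) : ζ^((r:ℕ):ℤ) = -1 := by
  rw [zpow_natCast]
  have h2 : (ζ ^ r - 1) * (ζ ^ r + 1) = 0 := by
    have h3 : (ζ ^ r) ^ 2 = 1 := by rw [← pow_mul, mul_comm, hζ.pow_eq_one]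
    linear_combination h3
  rcases mul_eq_zero.mp h2 with h | h
  · exact absurd (sub_eq_zero.mp h) (hζ.pow_ne_one_of_pos_of_lt (by omega) (by omega))
  · exact eq_neg_of_add_eq_zero_left h

lemma zeta_shift (hr : 1 ≤ r) (hζ : IsPrimitiveRoot ζ (2*r)) (e : ℤ) :
    ζ^(e - (r:ℕ)) = -ζ^e := by
  have hz : ζ ≠ 0 := hζ.ne_zero (by omega)
  rw [zpow_sub₀ hz, zeta_pow_r hr hζ, div_neg, div_one]

lemma brk_ne (hr : 1 ≤ r) (hζ : IsPrimitiveRoot ζ (2*r)) (m : ℤ) (h0 : 0 < m)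
    (h1 : m < r) : ζ^m - ζ^(-m) ≠ 0 := by
  intro h
  have hz : ζ ≠ 0 := hζ.ne_zero (by omega)
  have hm : ζ^m = ζ^(-m) := sub_eq_zero.mp h
  have key : ζ^m * ζ^(-m) = 1 := by
    rw [← zpow_add₀ hz, show m + -m = 0 by ring, zpow_zero]
  have h4 : ζ^(2*m) = 1 := by
    rw [two_mul, zpow_add₀ hz]
    nth_rewrite 2 [hm]
    exact key
  have hd := (hζ.zpow_eq_one_iff_dvd (2*m)).mp h4
  have := Int.le_of_dvd (by omega) hd
  omega

/-- vanishing of the middle quantum binomials `[r choose m]` at `ζ`. -/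
lemma D_van (hr : 1 ≤ r) (hζ : IsPrimitiveRoot ζ (2*r)) :
    ∀ m : ℕ, 0 < m → (m:ℤ) < r → D ζ r (m:ℤ) = 0 := by
  have hz : ζ ≠ 0 := hζ.ne_zero (by omega)
  intro m
  induction m with
  | zero => omega
  | succ p ih =>
    intro _ hlt
    have habs := D_absorb ζ hz r ((p:ℤ)+1)
    rw [show (p:ℤ)+1-1 = (p:ℤ) by ring] at habs
    have hRHS : (ζ^((r:ℤ)-((p:ℤ)+1)+1) - ζ^((p:ℤ)-(r:ℤ))) * D ζ r (p:ℤ) = 0 := by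
      rcases Nat.eq_zero_or_pos p with hp | hp
      · subst hp
        rw [show (r:ℤ)-(((0:ℕ):ℤ)+1)+1 = ((r:ℕ):ℤ) by push_cast; ring,
          show ((0:ℕ):ℤ) - ((r:ℕ):ℤ) = 0 - ((r:ℕ):ℤ) by ring,
          zeta_shift hr hζ 0, zeta_pow_r hr hζ, zpow_zero]
        ring
      · rw [ih hp (by omega)]
        ring
    rw [hRHS] at habs
    rcases mul_eq_zero.mp habs with h | h
    · exact absurd h (brk_ne hr hζ _ (by omega) (by push_cast; omega))
    · rw [show ((p:ℤ)+1) = (((p+1:ℕ)):ℤ) by push_cast; ring] at h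
      exact h

/-- r-step Lucas recursion for `D` at `ζ`. -/
lemma D_shift (hr : 1 ≤ r) (hζ : IsPrimitiveRoot ζ (2*r)) :
    ∀ (n : ℕ) (k : ℤ), D ζ (n+r) k =
      (-1:ℂ)^k * D ζ n k + (-1:ℂ)^((n:ℤ)+r+k) * D ζ n (k - r) := by
  have hz : ζ ≠ 0 := hζ.ne_zero (by omega)
  intro n
  induction n with
  | zero =>
    intro k
    have hn0 : ((0:ℕ):ℤ) = 0 := rfl
    rcases lt_trichotomy k 0 with hk | hk | hk
    · rw [D_neg ζ (0+r) hk, D_neg ζ 0 hk, D_neg ζ 0 (show k - (r:ℕ) < 0 by omega)]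
      ring
    · subst hk
      rw [show (0:ℕ)+r = r by omega, D_zero, D_zero, D_neg ζ 0 (by omega : (0:ℤ)-r < 0)]
      norm_num
    · rcases lt_trichotomy k r with hkr | hkr | hkr
      · obtain ⟨m, rfl⟩ := Int.eq_ofNat_of_zero_le hk.le
        rw [show (0:ℕ)+r = r by omega, D_van hr hζ m (by omega) (by omega),
          D_eq_zero ζ 0 (by omega : ((0:ℕ):ℤ) < m), D_neg ζ 0 (by omega : (m:ℤ)-r < 0)]
        ring
      · subst hkr
        rw [show (0:ℕ)+r = r by omega, show ((r:ℕ):ℤ) - (r:ℕ) = 0 by ring, D_diag, D_zero,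
          D_eq_zero ζ 0 (by omega : ((0:ℕ):ℤ) < r),
          sign_period (((0:ℕ):ℤ)+r+r) 0 r (by push_cast; ring)]
        norm_num
      · rw [show (0:ℕ)+r = r by omega, D_eq_zero ζ r (by omega : ((r:ℕ):ℤ) < k),
          D_eq_zero ζ 0 (by omega : ((0:ℕ):ℤ) < k), D_eq_zero ζ 0 (by omega : ((0:ℕ):ℤ) < k - r)]
        ring
  | succ n IH =>
    intro k
    rw [show n+1+r = (n+r)+1 by omega, D_pascal ζ hz (n+r) k, IH k, IH (k-1),
      D_pascal ζ hz n k, D_pascal ζ hz n (k-r)]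
    have cast1 : ((n+r:ℕ):ℤ) = (n:ℤ)+r := by push_cast; ring
    rw [cast1]
    have e1 : k-1-((n:ℤ)+r) = (k-1-(n:ℤ)) - r := by ring
    have e2 : k-r-1-(n:ℤ) = (k-1-(n:ℤ)) - r := by ring
    have e3 : k-1-(r:ℕ) = (k-r) - 1 := by push_cast; ring
    rw [e1, e2, e3, zeta_shift hr hζ k, zeta_shift hr hζ (k-1-(n:ℤ))]
    have s1 : (-1:ℂ)^(k-1) = -(-1:ℂ)^k :=
      (sign_period (k-1) (k+1) (-1) (by ring)).trans
        (by rw [zpow_add₀ (by norm_num : (-1:ℂ) ≠ 0), zpow_one]; ring)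
    have s2 : (-1:ℂ)^((n:ℤ)+r+(k-1)) = -(-1:ℂ)^((n:ℤ)+r+k) :=
      (sign_period ((n:ℤ)+r+(k-1)) ((n:ℤ)+r+k+1) (-1) (by ring)).trans
        (by rw [zpow_add₀ (by norm_num : (-1:ℂ) ≠ 0), zpow_one]; ring)
    have cast2 : ((n+1:ℕ):ℤ) = (n:ℤ)+1 := by push_cast; ring
    rw [cast2]
    have s3 : (-1:ℂ)^((n:ℤ)+1+r+k) = -(-1:ℂ)^((n:ℤ)+r+k) :=
      (sign_period ((n:ℤ)+1+r+k) ((n:ℤ)+r+k+1) 0 (by ring)).trans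
        (by rw [zpow_add₀ (by norm_num : (-1:ℂ) ≠ 0), zpow_one]; ring)
    rw [s1, s2, s3]
    ring



lemma sign_merge (k : ℤ) (e f : ℕ) (c : ℤ) (h : k + (e:ℤ) = (f:ℤ) + 2*c) :
    (-1:ℂ)^k * (-1:ℂ)^e = (-1:ℂ)^f := by
  rw [← zpow_natCast (-1:ℂ) e, ← zpow_natCast (-1:ℂ) f,
    ← zpow_add₀ (by norm_num : (-1:ℂ) ≠ 0)]
  exact sign_period _ _ c h

lemma main_lucas (hr : 1 ≤ r) (hζ : IsPrimitiveRoot ζ (2*r)) (a i : ℕ)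
    (ha : a < r) (hi : i < r) :
    ∀ (m u j : ℕ), u + j = m →
      D ζ (a+i+r*m) ((i:ℤ)+r*j) =
        (-1:ℂ)^(a*j + r*u*j + u*i) * ((m.choose j : ℕ) : ℂ) * D ζ (a+i) (i:ℤ) := by
  have hz : ζ ≠ 0 := hζ.ne_zero (by omega)
  have hout : ∀ (m j : ℕ), m < j → D ζ (a+i+r*m) ((i:ℤ)+r*j) = 0 := by
    intro m j hmj
    apply D_eq_zero
    have h1 : (m:ℤ) + 1 ≤ (j:ℤ) := by exact_mod_cast hmj
    have h2 : (0:ℤ) < (r:ℤ) := by exact_mod_cast hr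
    push_cast
    nlinarith
  intro m
  induction m with
  | zero =>
    rintro u j huj
    obtain ⟨rfl, rfl⟩ : u = 0 ∧ j = 0 := by omega
    norm_num
  | succ m IH =>
    rintro u j huj
    rw [show a+i+r*(m+1) = (a+i+r*m)+r by ring]
    cases j with
    | zero =>
      obtain rfl : u = m + 1 := by omega
      rw [show (i:ℤ)+(r:ℤ)*((0:ℕ):ℤ) = (i:ℤ) by push_cast; ring, D_shift hr hζ,
        D_neg ζ (a+i+r*m) (show (i:ℤ) - (r:ℕ) < 0 by omega)]
      have h0 := IH m 0 (by omega)
      rw [show (i:ℤ)+(r:ℤ)*((0:ℕ):ℤ) = (i:ℤ) by push_cast; ring] at h0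
      rw [h0]
      have hs := sign_merge (i:ℤ) (a*0 + r*m*0 + m*i) (a*0 + r*(m+1)*0 + (m+1)*i) 0
        (by push_cast; ring)
      simp only [Nat.choose_zero_right, Nat.cast_one]
      linear_combination (D ζ (a+i) (i:ℤ)) * hs
    | succ j' =>
      have huj' : u + j' = m := by omega
      rw [D_shift hr hζ,
        show (i:ℤ)+(r:ℤ)*((j'+1:ℕ):ℤ) - (r:ℕ) = (i:ℤ)+(r:ℤ)*((j':ℕ):ℤ) by push_cast; ring,
        IH u j' huj']
      cases u with
      | zero =>
        obtain rfl : m = j' := by omega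
        rw [hout m (m+1) (by omega)]
        have hs := sign_merge ((((a+i+r*m:ℕ)):ℤ) + ((r:ℕ):ℤ) + ((i:ℤ)+(r:ℤ)*((m+1:ℕ):ℤ)))
          (a*m + r*0*m + 0*i) (a*(m+1) + r*0*(m+1) + 0*i) ((i:ℤ) + r*m + r)
          (by push_cast; ring)
        rw [Nat.choose_self, Nat.choose_self, Nat.cast_one]
        linear_combination (D ζ (a+i) (i:ℤ)) * hs
      | succ u' =>
        have h1 := IH u' (j'+1) (by omega)
        rw [h1]
        have hs1 := sign_merge ((i:ℤ)+(r:ℤ)*((j'+1:ℕ):ℤ))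
          (a*(j'+1) + r*u'*(j'+1) + u'*i) (a*(j'+1) + r*(u'+1)*(j'+1) + (u'+1)*i) 0
          (by push_cast; ring)
        have hs2 := sign_merge ((((a+i+r*m:ℕ)):ℤ) + ((r:ℕ):ℤ) + ((i:ℤ)+(r:ℤ)*((j'+1:ℕ):ℤ)))
          (a*j' + r*(u'+1)*j' + (u'+1)*i) (a*(j'+1) + r*(u'+1)*(j'+1) + (u'+1)*i)
          ((i:ℤ) + r + r*j')
          (by
            have hm : (m:ℤ) = (u':ℤ) + (j':ℤ) + 1 := by exact_mod_cast (by omega : m = u' + j' + 1)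
            push_cast
            rw [hm]
            ring)
        have hch : ((m+1).choose (j'+1) : ℂ) = (m.choose j' : ℂ) + (m.choose (j'+1) : ℂ) := by
          rw [Nat.choose_succ_succ]
          push_cast
          ring
        linear_combination ((m.choose (j'+1) : ℂ) * D ζ (a+i) (i:ℤ)) * hs1
          + ((m.choose j' : ℂ) * D ζ (a+i) (i:ℤ)) * hs2
          - ((-1:ℂ)^(a*(j'+1) + r*(u'+1)*(j'+1) + (u'+1)*i) * D ζ (a+i) (i:ℤ)) * hch
end Root


/-- for `ζ` a primitive `2r`-th root of unity, `a, i < r` and `u, l ≥ 0`,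
`[a+i+r(u+l) choose i+rl]_ζ = (−1)^{al+rul+ui} · C(u+l, l) · [a+i choose i]_ζ`. -/
theorem stmt_8 (r : ℕ) (hr : 1 ≤ r) (ζ : ℂ) (hζ : IsPrimitiveRoot ζ (2 * r))
    (a i u l : ℕ) (ha : a < r) (hi : i < r) :
    qbinomC ζ (a + i + r * (u + l)) (i + r * l) =
      (-1 : ℂ) ^ (a * l + r * u * l + u * i) * ((u + l).choose l : ℂ) * qbinomC ζ (a + i) i := by
  have h := main_lucas (r := r) (ζ := ζ) hr hζ a i ha hi (u+l) u l rfl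
  rw [show (i:ℤ)+(r:ℤ)*((l:ℕ):ℤ) = ((i+r*l:ℕ):ℤ) by push_cast; ring,
    D_natCast, D_natCast] at h
  exact h
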